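/- Let n ≥ 2 and m ≥ 1 be integers, let i be an integer with 0 ≤ i ≤ m−1, let u_j(s) = cosh(s)^j · sinh(s)^{2−n−m} for s > 0, and let κ_j = (m−j−1)(m+n−2−j). Then for every s > 0, applying successively the operators (𝒟_m − κ_i), (𝒟_m − κ_{i−2}), …, (𝒟_m − κ_{i−2⌊i/2⌋}) (in this order, (𝒟_m − κ_i) applied first) to u_i yields the zero function: ((𝒟_m − κ_{i−2⌊i/2⌋}) ∘ ⋯ ∘ (𝒟_m − κ_{i−2}) ∘ (𝒟_m − κ_i)) u_i (s) = 0. -/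

import Mathlib

/-- The second-order operator `𝒟_k f (s) = f''(s) + (n-1)·coth(s)·f'(s)
    - (k(k+n-2)/sinh²(s))·f(s)`. -/
noncomputable def Dop (n k : ℤ) (f : ℝ → ℝ) : ℝ → ℝ := fun s =>
  deriv (deriv f) s + ((n : ℝ) - 1) * (Real.cosh s / Real.sinh s) * deriv f s
    - ((k : ℝ) * ((k : ℝ) + (n : ℝ) - 2) / (Real.sinh s) ^ 2) * f s

/-- `(𝒟_k - c) f = 𝒟_k f - c·f`. -/
noncomputable def Aop (n k : ℤ) (c : ℝ) (f : ℝ → ℝ) : ℝ → ℝ := fun s =>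
  Dop n k f s - c * f s

/-- `chainA n m κ i q` is the composition
    `(𝒟_m - κ_{i-2(q-1)}) ∘ ⋯ ∘ (𝒟_m - κ_{i-2}) ∘ (𝒟_m - κ_i)`,
    i.e. the operators `(𝒟_m - κ_{i-2p})` for `p = 0, …, q-1`, with `p = 0` applied first. -/
noncomputable def chainA (n m : ℤ) (κ : ℤ → ℝ) (i : ℤ) : ℕ → (ℝ → ℝ) → (ℝ → ℝ)
  | 0 => id
  | q + 1 => fun f => Aop n m (κ (i - 2 * (q : ℤ))) (chainA n m κ i q f)


noncomputable def fab (a b : ℤ) : ℝ → ℝ := fun t => Real.cosh t ^ a * Real.sinh t ^ b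

lemma fab_hasDerivAt (a b : ℤ) {s : ℝ} (hs : 0 < s) :
    HasDerivAt (fab a b)
      ((a : ℝ) * fab (a - 1) (b + 1) s + (b : ℝ) * fab (a + 1) (b - 1) s) s := by
  have hC : Real.cosh s ≠ 0 := (Real.cosh_pos s).ne'
  have hS : Real.sinh s ≠ 0 := (Real.sinh_pos_iff.2 hs).ne'
  have h1 : HasDerivAt (fun t => Real.cosh t ^ a)
      (((a : ℝ) * Real.cosh s ^ (a - 1)) * Real.sinh s) s :=
    (hasDerivAt_zpow a (Real.cosh s) (Or.inl hC)).comp s (Real.hasDerivAt_cosh s)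
  have h2 : HasDerivAt (fun t => Real.sinh t ^ b)
      (((b : ℝ) * Real.sinh s ^ (b - 1)) * Real.cosh s) s :=
    (hasDerivAt_zpow b (Real.sinh s) (Or.inl hS)).comp s (Real.hasDerivAt_sinh s)
  have := h1.mul h2
  refine this.congr_deriv ?_
  simp only [fab]
  rw [zpow_add_one₀ hS, zpow_add_one₀ hC]
  ring

lemma deriv_fab (a b : ℤ) {s : ℝ} (hs : 0 < s) :
    deriv (fab a b) s = (a : ℝ) * fab (a - 1) (b + 1) s + (b : ℝ) * fab (a + 1) (b - 1) s :=
  (fab_hasDerivAt a b hs).deriv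

lemma deriv2_fab (a b : ℤ) {s : ℝ} (hs : 0 < s) :
    deriv (deriv (fab a b)) s =
      (a : ℝ) * ((a - 1 : ℤ) * fab (a - 2) (b + 2) s + (b + 1 : ℤ) * fab a b s)
      + (b : ℝ) * ((a + 1 : ℤ) * fab a b s + (b - 1 : ℤ) * fab (a + 2) (b - 2) s) := by
  have hev : deriv (fab a b) =ᶠ[nhds s]
      (fun t => (a : ℝ) * fab (a - 1) (b + 1) t + (b : ℝ) * fab (a + 1) (b - 1) t) :=
    Filter.eventuallyEq_of_mem (Ioi_mem_nhds hs) (fun t ht => deriv_fab a b ht)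
  rw [hev.deriv_eq]
  have h1 := ((fab_hasDerivAt (a - 1) (b + 1) hs).const_mul (a : ℝ)).add
    ((fab_hasDerivAt (a + 1) (b - 1) hs).const_mul (b : ℝ))
  rw [HasDerivAt.deriv (f := fun t => (a : ℝ) * fab (a - 1) (b + 1) t + (b : ℝ) * fab (a + 1) (b - 1) t) h1]
  simp only [show a - 1 - 1 = a - 2 by ring, show b + 1 + 1 = b + 2 by ring,
    show a - 1 + 1 = a by ring, show b + 1 - 1 = b by ring, show a + 1 - 1 = a by ring,
    show b - 1 + 1 = b by ring, show a + 1 + 1 = a + 2 by ring, show b - 1 - 1 = b - 2 by ring]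



lemma key (n m j : ℤ) {s : ℝ} (hs : 0 < s) :
    Aop n m (((m - j - 1) * (m + n - 2 - j) : ℤ) : ℝ) (fab j (2 - n - m)) s
      = (-((j : ℝ) * ((j : ℝ) - 1))) * fab (j - 2) (2 - n - m) s := by
  have hC : Real.cosh s ≠ 0 := (Real.cosh_pos s).ne'
  have hS : Real.sinh s ≠ 0 := (Real.sinh_pos_iff.2 hs).ne'
  set c := Real.cosh s with hcdef
  set t := Real.sinh s with htdef
  have hct : c * c = 1 + t * t := by
    have h := Real.cosh_sq s
    rw [← hcdef, ← htdef] at h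
    nlinarith [h]
  set p : ℤ := 2 - n - m with hp
  have o1 : c ^ j = c ^ (j - 1) * c := by
    conv_lhs => rw [show j = j - 1 + 1 by ring]
    rw [zpow_add_one₀ hC]
  have o2 : c ^ (j + 2) = c ^ (j + 1) * c := by
    conv_lhs => rw [show j + 2 = j + 1 + 1 by ring]
    rw [zpow_add_one₀ hC]
  have g0 : t ^ (p + 1) = t ^ p * t := zpow_add_one₀ hS p
  have g0' : t ^ (p - 1) = t ^ (p - 2) * t := by
    conv_lhs => rw [show p - 1 = p - 2 + 1 by ring]
    rw [zpow_add_one₀ hS]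
  have e1 : c ^ j = c ^ (j - 2) * (1 + t * t) := by
    conv_lhs => rw [show j = j - 2 + 1 + 1 by ring]
    rw [zpow_add_one₀ hC, zpow_add_one₀ hC, mul_assoc, hct]
  have e2 : c ^ (j + 2) = c ^ (j - 2) * ((1 + t * t) * (1 + t * t)) := by
    conv_lhs => rw [show j + 2 = j - 2 + 1 + 1 + 1 + 1 by ring]
    rw [zpow_add_one₀ hC, zpow_add_one₀ hC, zpow_add_one₀ hC, zpow_add_one₀ hC]
    rw [show c ^ (j - 2) * c * c * c * c = c ^ (j - 2) * ((c * c) * (c * c)) by ring, hct]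
  have f1 : t ^ p = t ^ (p - 2) * (t * t) := by
    conv_lhs => rw [show p = p - 2 + 1 + 1 by ring]
    rw [zpow_add_one₀ hS, zpow_add_one₀ hS, mul_assoc]
  have f2 : t ^ (p + 2) = t ^ (p - 2) * (t * t * (t * t)) := by
    conv_lhs => rw [show p + 2 = p - 2 + 1 + 1 + 1 + 1 by ring]
    rw [zpow_add_one₀ hS, zpow_add_one₀ hS, zpow_add_one₀ hS, zpow_add_one₀ hS]
    ring
  have hcoth : ((n : ℝ) - 1) * (c / t) * ((j : ℝ) * (c ^ (j - 1) * t ^ (p + 1))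
        + (p : ℝ) * (c ^ (j + 1) * t ^ (p - 1)))
      = ((n : ℝ) - 1) * ((j : ℝ) * (c ^ j * t ^ p)
        + (p : ℝ) * (c ^ (j + 2) * t ^ (p - 2))) := by
    rw [o1, o2, g0, g0']
    field_simp
  have hdiv : ∀ X : ℝ, X / t ^ 2 * (c ^ j * t ^ p) = X * (c ^ j * t ^ (p - 2)) := by
    intro X
    rw [f1]
    field_simp
  simp only [Aop, Dop, deriv2_fab j p hs, deriv_fab j p hs, fab, ← hcdef, ← htdef]
  rw [hcoth, hdiv, e1, e2, f1, f2]
  push_cast [hp]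
  ring

lemma Aop_congr (n k : ℤ) (κv : ℝ) {f g : ℝ → ℝ} (h : ∀ t, 0 < t → f t = g t)
    {s : ℝ} (hs : 0 < s) : Aop n k κv f s = Aop n k κv g s := by
  have hfg : f =ᶠ[nhds s] g :=
    Filter.eventuallyEq_of_mem (Ioi_mem_nhds hs) (fun t ht => h t ht)
  have hd : deriv f =ᶠ[nhds s] deriv g :=
    Filter.eventuallyEq_of_mem (Ioi_mem_nhds hs)
      (fun t ht =>
        (Filter.eventuallyEq_of_mem (Ioi_mem_nhds ht) (fun r hr => h r hr)).deriv_eq)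
  simp only [Aop, Dop, hd.deriv_eq, hfg.deriv_eq, h s hs]

lemma Aop_const_mul (n k : ℤ) (κv a : ℝ) (g : ℝ → ℝ) (s : ℝ) :
    Aop n k κv (fun t => a * g t) s = a * Aop n k κv g s := by
  have h1 : deriv (fun t => a * g t) = fun t => a * deriv g t :=
    funext fun t => deriv_const_mul_field a
  simp only [Aop, Dop, h1, deriv_const_mul_field]
  ring


noncomputable def cfac (i : ℤ) (q : ℕ) : ℝ :=
  ∏ p ∈ Finset.range q, (-(((i - 2 * p : ℤ) : ℝ) * (((i - 2 * p : ℤ) : ℝ) - 1)))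

lemma chain_formula (n m : ℤ) (κ : ℤ → ℝ)
    (hκ : ∀ j : ℤ, κ j = ((m - j - 1) * (m + n - 2 - j) : ℤ)) (i : ℤ) :
    ∀ q : ℕ, ∀ s : ℝ, 0 < s →
      chainA n m κ i q (fab i (2 - n - m)) s
        = cfac i q * fab (i - 2 * q) (2 - n - m) s := by
  intro q
  induction q with
  | zero => intro s hs; simp [chainA, cfac]
  | succ q ih =>
    intro s hs
    have step1 : chainA n m κ i (q + 1) (fab i (2 - n - m)) s
        = Aop n m (κ (i - 2 * (q : ℤ)))
            (fun t => cfac i q * fab (i - 2 * q) (2 - n - m) t) s := by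
      exact Aop_congr n m _ (fun t ht => ih t ht) hs
    rw [step1, Aop_const_mul]
    have hj := key n m (i - 2 * (q : ℤ)) hs
    rw [hκ (i - 2 * (q : ℤ)), hj]
    have hc : cfac i (q + 1)
        = cfac i q * (-(((i - 2 * q : ℤ) : ℝ) * (((i - 2 * q : ℤ) : ℝ) - 1))) :=
      Finset.prod_range_succ _ q
    rw [hc, show i - 2 * (q : ℤ) - 2 = i - 2 * ((q + 1 : ℕ) : ℤ) by push_cast; ring]
    push_cast
    ring

/-- The cancellation identity in the proof of Lemma `L:Ind`:
    `((𝒟_m - κ_{i-2⌊i/2⌋}) ∘ ⋯ ∘ (𝒟_m - κ_{i-2}) ∘ (𝒟_m - κ_i)) u_i = 0`,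
    where `u_j(s) = cosh^j(s) sinh^{2-n-m}(s)` and `κ_j = (m-j-1)(m+n-2-j)`. -/
theorem stmt_6 (n m : ℤ) (hn : 2 ≤ n) (hm : 1 ≤ m)
    (i : ℤ) (hi0 : 0 ≤ i) (him : i ≤ m - 1)
    (u : ℤ → ℝ → ℝ)
    (hu : ∀ (j : ℤ) (s : ℝ), u j s = Real.cosh s ^ j * Real.sinh s ^ (2 - n - m))
    (κ : ℤ → ℝ) (hκ : ∀ j : ℤ, κ j = ((m - j - 1) * (m + n - 2 - j) : ℤ))
    (s : ℝ) (hs : 0 < s) :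
    chainA n m κ i ((i / 2).toNat + 1) (u i) s = 0 := by
  have hufab : u i = fab i (2 - n - m) := funext fun t => hu i t
  rw [hufab, chain_formula n m κ hκ i ((i / 2).toNat + 1) s hs]
  set Q := (i / 2).toNat with hQdef
  have hQ : (Q : ℤ) = i / 2 := Int.toNat_of_nonneg (Int.ediv_nonneg hi0 (by norm_num))
  have hzero : (-(((i - 2 * Q : ℤ) : ℝ) * (((i - 2 * Q : ℤ) : ℝ) - 1))) = 0 := by
    have hr : i - 2 * (Q : ℤ) = i % 2 := by omega
    rw [hr]
    rcases Int.emod_two_eq i with h | h <;> rw [h] <;> norm_num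
  have hc : cfac i (Q + 1)
      = cfac i Q * (-(((i - 2 * Q : ℤ) : ℝ) * (((i - 2 * Q : ℤ) : ℝ) - 1))) :=
    Finset.prod_range_succ _ Q
  rw [hc, hzero, mul_zero, zero_mul]
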